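/- For every d ≥ 1 and j with 0 ≤ j ≤ d, the coefficient of n^j in the polynomial d!·(n+1)^d equals ∑_{i=0}^{d-1} A(d,i)·e(d,i,j), where e(d,i,j) := ∑_{ℓ=0}^{d-i} |s(d-i+1, ℓ+1)|·s(i, j-ℓ); that is, d!·C(d,j) = ∑_{i=0}^{d-1} A(d,i)·e(d,i,j). -/

import Mathlib

open Nat

/-- The signed Stirling number of the first kind `s(m, z)`: the coefficient of `x^z` in
`x(x-1)⋯(x-m+1)`, with the convention that it is `0` for `z < 0`. -/
noncomputable def sgnStirling (m : ℕ) (z : ℤ) : ℤ :=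
  if 0 ≤ z then (∏ r ∈ Finset.range m, (Polynomial.X - Polynomial.C (r : ℤ))).coeff z.toNat
  else 0

/-- `e(d,i,j) := ∑_{ℓ=0}^{d-i} |s(d-i+1, ℓ+1)|·s(i, j-ℓ)`. -/
noncomputable def eNum (d i j : ℕ) : ℤ :=
  ∑ ℓ ∈ Finset.range (d - i + 1),
    ((sgnStirling (d - i + 1) ((ℓ : ℤ) + 1)).natAbs : ℤ) * sgnStirling i ((j : ℤ) - (ℓ : ℤ))

/-- The Eulerian number `A(d,i)`: the number of permutations of `{1,…,d}` with exactly `i`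
descents, a descent of `σ` (in one-line notation) being a position `t` with `σ(t) > σ(t+1)`. -/
noncomputable def eulerian (d i : ℕ) : ℕ :=
  Nat.card {σ : Equiv.Perm (Fin d) //
    Nat.card {t : Fin d // ∃ h : (t : ℕ) + 1 < d, σ ⟨(t : ℕ) + 1, h⟩ < σ t} = i}

open Polynomial Finset

namespace Wp

noncomputable def U (m : ℕ) : ℤ[X] := ∏ r ∈ range m, (X + C (r : ℤ))
noncomputable def V (m : ℕ) : ℤ[X] := ∏ r ∈ range m, (X - C (r : ℤ))

lemma sign_UV (m : ℕ) : ∀ k, (-1 : ℤ)^k * (V m).coeff k = (-1)^m * (U m).coeff k := by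
  induction m with
  | zero =>
    intro k
    rcases k with _ | a <;> simp [U, V, Polynomial.coeff_one]
  | succ m ih =>
    intro k
    have hU : U (m+1) = U m * (X - C (-(m:ℤ))) := by
      simp [U, prod_range_succ, sub_neg_eq_add]
    have hV : V (m+1) = V m * (X - C (m:ℤ)) := by simp [V, prod_range_succ]
    rcases k with _ | a
    · rw [hU, hV, Polynomial.mul_coeff_zero, Polynomial.mul_coeff_zero]
      have h0 := ih 0
      simp only [Polynomial.coeff_sub, Polynomial.coeff_X_zero, Polynomial.coeff_C, reduceIte,
        pow_zero, one_mul] at h0 ⊢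
      linear_combination (-(m:ℤ)) * h0
    · rw [hU, hV, Polynomial.coeff_mul_X_sub_C, Polynomial.coeff_mul_X_sub_C]
      have h1 := ih a
      have h2 := ih (a+1)
      linear_combination (-1 : ℤ) * h1 + (-(m:ℤ)) * h2

lemma U_coeff_nonneg (m : ℕ) : ∀ k, 0 ≤ (U m).coeff k := by
  induction m with
  | zero =>
    intro k
    simp only [U, range_zero, prod_empty, Polynomial.coeff_one]
    split <;> simp
  | succ m ih =>
    intro k
    have hU : U (m+1) = U m * (X - C (-(m:ℤ))) := by
      simp [U, prod_range_succ, sub_neg_eq_add]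
    rcases k with _ | a
    · rw [hU, Polynomial.mul_coeff_zero]
      simp only [Polynomial.coeff_sub, Polynomial.coeff_X_zero, Polynomial.coeff_C]
      simp only [reduceIte, zero_sub, neg_neg]
      exact mul_nonneg (ih 0) (Int.natCast_nonneg m)
    · rw [hU, Polynomial.coeff_mul_X_sub_C]
      have ha := ih a
      have hb : (0:ℤ) ≤ (U m).coeff (a+1) * m := mul_nonneg (ih (a+1)) (Int.natCast_nonneg m)
      linarith

lemma natAbs_V (m k : ℕ) : (((V m).coeff k).natAbs : ℤ) = (U m).coeff k := by
  have h := sign_UV m k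
  have habs : |(V m).coeff k| = |(U m).coeff k| := by
    have : |(-1:ℤ)^k * (V m).coeff k| = |(-1:ℤ)^m * (U m).coeff k| := by rw [h]
    simpa [abs_mul] using this
  calc (((V m).coeff k).natAbs : ℤ) = |(V m).coeff k| := (Int.abs_eq_natAbs _).symm
    _ = |(U m).coeff k| := habs
    _ = (U m).coeff k := abs_of_nonneg (U_coeff_nonneg m k)

lemma sgnStirling_natCast (m k : ℕ) : sgnStirling m (k : ℤ) = (V m).coeff k := by
  simp [sgnStirling, V]

lemma sgnStirling_neg (m : ℕ) {z : ℤ} (hz : z < 0) : sgnStirling m z = 0 := by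
  simp [sgnStirling, not_le.2 hz]

end Wp

namespace Wp

noncomputable def Ap (q : ℕ) : ℤ[X] := ∏ r ∈ range q, (X + C ((r:ℤ)+1))

noncomputable def P (d i : ℕ) : ℤ[X] := ∏ k ∈ range d, (X + C ((k:ℤ) + 1 - i))

lemma U_succ (m : ℕ) : U (m+1) = Ap m * X := by
  rw [U, prod_range_succ']
  simp [Ap]

lemma Ap_coeff (m ℓ : ℕ) : (Ap m).coeff ℓ = (U (m+1)).coeff (ℓ+1) := by
  rw [U_succ, Polynomial.coeff_mul_X]

lemma natAbs_sgnStirling (m ℓ : ℕ) :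
    ((sgnStirling (m+1) ((ℓ:ℤ)+1)).natAbs : ℤ) = (Ap m).coeff ℓ := by
  have h : ((ℓ:ℤ)+1) = ((ℓ+1 : ℕ) : ℤ) := by push_cast; ring
  rw [h, sgnStirling_natCast, natAbs_V, Ap_coeff]

lemma Ap_natDegree (m : ℕ) : (Ap m).natDegree = m := by
  rw [Ap, Polynomial.natDegree_prod]
  · simp only [Polynomial.natDegree_X_add_C, Finset.sum_const, Finset.card_range,
      smul_eq_mul, mul_one]
  · intro r _
    exact Polynomial.X_add_C_ne_zero _

lemma P_eq (d i : ℕ) (hi : i ≤ d) : P d i = Ap (d - i) * V i := by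
  obtain ⟨q, rfl⟩ : ∃ q, d = i + q := ⟨d - i, by omega⟩
  simp only [Nat.add_sub_cancel_left]
  rw [P, prod_range_add, mul_comm]
  congr 1
  · refine Finset.prod_congr rfl fun x _ => ?_
    congr 1
    push_cast
    ring
  · rw [V, ← prod_range_reflect (fun x => X - C (x:ℤ)) i]
    refine Finset.prod_congr rfl fun x hx => ?_
    rw [Finset.mem_range] at hx
    have h1 : ((i - 1 - x : ℕ) : ℤ) = (i:ℤ) - (1 + x) := by omega
    have h2 : -((i:ℤ) - (1 + x)) = (x:ℤ) + 1 + -(i:ℤ) := by ring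
    rw [h1, sub_eq_add_neg X (C ((i:ℤ) - (1 + x))), ← Polynomial.C_neg, h2,
      show (x:ℤ) + 1 + -(i:ℤ) = (x:ℤ) + 1 - (i:ℤ) from by ring]

lemma P_coeff (d i j : ℕ) (hi : i ≤ d) : (P d i).coeff j = eNum d i j := by
  classical
  set m := d - i with hm
  have key : ∀ ℓ : ℕ, ((sgnStirling (m+1) ((ℓ:ℤ)+1)).natAbs : ℤ) = (Ap m).coeff ℓ :=
    fun ℓ => natAbs_sgnStirling m ℓ
  set F : ℕ → ℤ := fun ℓ => (Ap m).coeff ℓ * sgnStirling i ((j:ℤ) - (ℓ:ℤ)) with hF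
  have e1 : (P d i).coeff j = ∑ ℓ ∈ range (j+1), F ℓ := by
    rw [P_eq d i hi, Polynomial.coeff_mul,
      Finset.Nat.sum_antidiagonal_eq_sum_range_succ_mk]
    refine Finset.sum_congr rfl fun ℓ hℓ => ?_
    rw [Finset.mem_range, Nat.lt_succ_iff] at hℓ
    have h2 : ((j:ℤ) - (ℓ:ℤ)) = ((j - ℓ : ℕ) : ℤ) := by omega
    rw [hF]
    simp only
    rw [h2, sgnStirling_natCast]
  have e2 : eNum d i j = ∑ ℓ ∈ range (m+1), F ℓ := by
    rw [eNum]
    refine Finset.sum_congr rfl fun ℓ _ => ?_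
    rw [hF]; simp only [← hm, key ℓ]
  have big : ∀ s : Finset ℕ, range (j+1) ⊆ s → (∀ ℓ ∈ s, ℓ < j + 1 ∨ ℓ < m + 1) →
      ∑ ℓ ∈ s, F ℓ = ∑ ℓ ∈ range (j+1), F ℓ := by
    intro s hs _
    refine (Finset.sum_subset hs fun ℓ _ hℓ => ?_).symm
    rw [Finset.mem_range, not_lt] at hℓ
    have : sgnStirling i ((j:ℤ) - (ℓ:ℤ)) = 0 := by
      apply sgnStirling_neg
      omega
    simp [hF, this]
  have big2 : ∑ ℓ ∈ range (max (j+1) (m+1)), F ℓ = ∑ ℓ ∈ range (m+1), F ℓ := by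
    refine (Finset.sum_subset (Finset.range_subset_range.2 (le_max_right _ _))
      fun ℓ _ hℓ => ?_).symm
    rw [Finset.mem_range, not_lt] at hℓ
    have : (Ap m).coeff ℓ = 0 := by
      apply Polynomial.coeff_eq_zero_of_natDegree_lt
      rw [Ap_natDegree]
      omega
    simp [hF, this]
  have big1 : ∑ ℓ ∈ range (max (j+1) (m+1)), F ℓ = ∑ ℓ ∈ range (j+1), F ℓ := by
    refine (Finset.sum_subset (Finset.range_subset_range.2 (le_max_left _ _))
      fun ℓ _ hℓ => ?_).symm
    rw [Finset.mem_range, not_lt] at hℓ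
    have : sgnStirling i ((j:ℤ) - (ℓ:ℤ)) = 0 := by
      apply sgnStirling_neg
      omega
    simp [hF, this]
  rw [e1, e2, ← big1, ← big2]

lemma P_eval (d i n : ℕ) (hi : i < d) (hn : d ≤ n) :
    (P d i).eval (n:ℤ) = ((n + d - i).descFactorial d : ℤ) := by
  calc (P d i).eval (n:ℤ) = ∏ k ∈ range d, ((n:ℤ) + ((k:ℤ) + 1 - (i:ℤ))) := by
        rw [P, Polynomial.eval_prod]
        exact Finset.prod_congr rfl fun k _ => by
          simp only [Polynomial.eval_add, Polynomial.eval_X, Polynomial.eval_C]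
    _ = ∏ r ∈ range d, ((n + d - i - r : ℕ) : ℤ) := by
        rw [← prod_range_reflect (fun r => ((n + d - i - r : ℕ) : ℤ)) d]
        refine Finset.prod_congr rfl fun r hr => ?_
        rw [Finset.mem_range] at hr
        omega
    _ = ((n + d - i).descFactorial d : ℤ) := by
        rw [Nat.descFactorial_eq_prod_range, Nat.cast_prod]

end Wp

namespace Wp

def smEquiv (k m : ℕ) : {f : Fin k → Fin m // StrictMono f} ≃
    {s : Finset (Fin m) // s ∈ Finset.powersetCard k (Finset.univ : Finset (Fin m))} where
  toFun f := ⟨Finset.univ.image f.1, by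
    rw [Finset.mem_powersetCard]
    exact ⟨Finset.subset_univ _, by
      rw [Finset.card_image_of_injective _ f.2.injective, Finset.card_univ, Fintype.card_fin]⟩⟩
  invFun s := ⟨(s.1.orderEmbOfFin ((Finset.mem_powersetCard.1 s.2).2)),
    (s.1.orderEmbOfFin _).strictMono⟩
  left_inv f := by
    ext x
    have := congrFun (Finset.orderEmbOfFin_unique
      (show (Finset.univ.image f.1).card = k by
        rw [Finset.card_image_of_injective _ f.2.injective, Finset.card_univ, Fintype.card_fin])
      (fun y => Finset.mem_image_of_mem _ (Finset.mem_univ y)) f.2).symm x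
    simpa using congrArg Fin.val this
  right_inv s := by
    ext1
    apply Finset.coe_injective
    rw [Finset.coe_image, Finset.coe_univ, Set.image_univ, Finset.range_orderEmbOfFin]

lemma card_strictMono (k m : ℕ) :
    Nat.card {f : Fin k → Fin m // StrictMono f} = m.choose k := by
  rw [Nat.card_congr (smEquiv k m), Nat.card_eq_fintype_card, Fintype.card_coe,
    Finset.card_powersetCard, Finset.card_univ, Fintype.card_fin]

end Wp

namespace Wp

open Finset

variable {d : ℕ}

/-- The descent set of a permutation. -/
def Dset (σ : Equiv.Perm (Fin d)) : Finset (Fin d) :=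
  Finset.univ.filter (fun t => ∃ h : (t : ℕ) + 1 < d, σ ⟨(t : ℕ) + 1, h⟩ < σ t)

def desF (σ : Equiv.Perm (Fin d)) : ℕ := (Dset σ).card

lemma mem_Dset {σ : Equiv.Perm (Fin d)} {t : Fin d} :
    t ∈ Dset σ ↔ ∃ h : (t : ℕ) + 1 < d, σ ⟨(t : ℕ) + 1, h⟩ < σ t := by
  simp [Dset]

lemma desF_eq (σ : Equiv.Perm (Fin d)) :
    Nat.card {t : Fin d // ∃ h : (t : ℕ) + 1 < d, σ ⟨(t : ℕ) + 1, h⟩ < σ t} = desF σ := by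
  rw [Nat.card_eq_fintype_card, Fintype.card_subtype, desF, Dset]

lemma Dset_subset (σ : Equiv.Perm (Fin d)) {l : Fin d} (hl : (l : ℕ) = d - 1) :
    Dset σ ⊆ Finset.Iio l := by
  intro t ht
  rw [mem_Dset] at ht
  obtain ⟨h, -⟩ := ht
  rw [Finset.mem_Iio, Fin.lt_def]
  omega

lemma desF_le (hd : 1 ≤ d) (σ : Equiv.Perm (Fin d)) : desF σ ≤ d - 1 := by
  have := Finset.card_le_card (Dset_subset σ (l := ⟨d - 1, by omega⟩) rfl)
  rwa [Fin.card_Iio] at this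

/-- number of non-descents strictly before `t`. -/
def cF (σ : Equiv.Perm (Fin d)) (t : Fin d) : ℕ :=
  ((Finset.Iio t).filter (fun u => u ∉ Dset σ)).card

lemma cF_le_val (σ : Equiv.Perm (Fin d)) (t : Fin d) : cF σ t ≤ (t : ℕ) := by
  calc cF σ t ≤ (Finset.Iio t).card := Finset.card_filter_le _ _
    _ = (t : ℕ) := Fin.card_Iio t

lemma cF_step (σ : Equiv.Perm (Fin d)) (t u : Fin d) (htu : (u : ℕ) = (t : ℕ) + 1) :
    cF σ u = cF σ t + (if t ∈ Dset σ then 0 else 1) := by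
  have hIio : Finset.Iio u = insert t (Finset.Iio t) := by
    ext v
    simp only [Finset.mem_Iio, Finset.mem_insert, Fin.lt_def, htu]
    constructor
    · intro hv
      rcases Nat.lt_succ_iff_lt_or_eq.1 hv with h | h
      · exact Or.inr h
      · exact Or.inl (Fin.ext h)
    · rintro (rfl | h) <;> omega
  rw [cF, cF, hIio, Finset.filter_insert]
  split_ifs with h
  · omega
  · rw [Finset.card_insert_of_notMem (by simp), add_comm]

lemma cF_mono (σ : Equiv.Perm (Fin d)) {t u : Fin d} (h : t ≤ u) : cF σ t ≤ cF σ u :=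
  Finset.card_le_card (Finset.filter_subset_filter _ (Finset.Iio_subset_Iio h))

lemma cF_last (σ : Equiv.Perm (Fin d)) {l : Fin d} (hl : (l : ℕ) = d - 1) :
    cF σ l = (d - 1) - desF σ := by
  have key := Finset.card_filter_add_card_filter_not
    (s := Finset.Iio l) (p := fun u => u ∈ Dset σ)
  have hD : Finset.filter (fun u => u ∈ Dset σ) (Finset.Iio l) = Dset σ := by
    apply Finset.Subset.antisymm
    · intro x hx
      exact (Finset.mem_filter.1 hx).2
    · intro x hx
      exact Finset.mem_filter.2 ⟨Dset_subset σ hl hx, hx⟩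
  rw [hD, Fin.card_Iio, hl] at key
  simp only [cF, desF] at *
  omega

lemma cF_le (hd : 1 ≤ d) (σ : Equiv.Perm (Fin d)) (t : Fin d) :
    cF σ t ≤ (d - 1) - desF σ := by
  have hlast : cF σ (⟨d - 1, by omega⟩ : Fin d) = (d - 1) - desF σ := cF_last σ rfl
  rw [← hlast]
  apply cF_mono
  rw [Fin.le_def]
  simp only
  omega

end Wp

namespace Wp

variable {d : ℕ}

lemma rel_of_adj {α : Sort*} (r : α → α → Prop) (hr : Transitive r) {g : Fin d → α}
    (H : ∀ (t : ℕ) (h1 : t + 1 < d), r (g ⟨t, Nat.lt_of_succ_lt h1⟩) (g ⟨t + 1, h1⟩)) :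
    ∀ i j : Fin d, i < j → r (g i) (g j) := by
  have key : ∀ (k i : ℕ) (hik : i + (k + 1) < d),
      r (g ⟨i, by omega⟩) (g ⟨i + (k + 1), hik⟩) := by
    intro k
    induction k with
    | zero => intro i hik; exact H i hik
    | succ k ih =>
      intro i hik
      have hj : (⟨i + (k + 1) + 1, by omega⟩ : Fin d) = ⟨i + (k + 1 + 1), hik⟩ := by
        ext; simp only; omega
      exact hr (ih i (by omega)) (hj ▸ H (i + (k + 1)) (by omega))
  rintro ⟨a, ha⟩ ⟨b, hb⟩ hab
  rw [Fin.mk_lt_mk] at hab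
  have hj : (⟨a + (b - a - 1 + 1), by omega⟩ : Fin d) = ⟨b, hb⟩ := by
    ext; simp only; omega
  exact hj ▸ key (b - a - 1) a (by omega)

lemma strictMono_of_adj {g : Fin d → ℕ}
    (H : ∀ (t : ℕ) (h1 : t + 1 < d), g ⟨t, Nat.lt_of_succ_lt h1⟩ < g ⟨t + 1, h1⟩) :
    StrictMono g :=
  fun i j hij => rel_of_adj (· < ·) (fun _ _ _ => Nat.lt_trans) H i j hij

lemma monotone_of_adj {g : Fin d → ℕ}
    (H : ∀ (t : ℕ) (h1 : t + 1 < d), g ⟨t, Nat.lt_of_succ_lt h1⟩ ≤ g ⟨t + 1, h1⟩) :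
    Monotone g := by
  intro i j hij
  rcases eq_or_lt_of_le hij with rfl | h
  · exact le_refl _
  · exact rel_of_adj (· ≤ ·) (fun _ _ _ => Nat.le_trans) H i j h

/-- the key "stability" lemma: if `g` is monotone and strictly increases across every descent
of `σ`, then on blocks of equal `g`-values, `σ` is increasing. -/
lemma block_lemma {N : ℕ} (σ : Equiv.Perm (Fin d)) {g : Fin d → Fin N}
    (hg : Monotone g)
    (hc : ∀ (t : Fin d) (h1 : (t : ℕ) + 1 < d),
      σ ⟨(t : ℕ) + 1, h1⟩ < σ t → g t < g ⟨(t : ℕ) + 1, h1⟩) :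
    ∀ i j : Fin d, i < j → g i = g j → σ i < σ j := by
  set r : Fin N × Fin d → Fin N × Fin d → Prop :=
    fun x y => x.1 ≤ y.1 ∧ (x.1 = y.1 → x.2 < y.2) with hr
  have htrans : Transitive r := by
    rintro x y z ⟨hxy1, hxy2⟩ ⟨hyz1, hyz2⟩
    refine ⟨le_trans hxy1 hyz1, fun hxz => ?_⟩
    have h1 : x.1 = y.1 := le_antisymm hxy1 (hxz ▸ hyz1)
    exact lt_trans (hxy2 h1) (hyz2 (h1 ▸ hxz))
  have H : ∀ (t : ℕ) (h1 : t + 1 < d),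
      r ((fun u => (g u, σ u)) ⟨t, Nat.lt_of_succ_lt h1⟩) ((fun u => (g u, σ u)) ⟨t + 1, h1⟩) := by
    intro t h1
    constructor
    · exact hg (by rw [Fin.mk_le_mk]; omega)
    · intro heq
      rcases lt_trichotomy (σ ⟨t, Nat.lt_of_succ_lt h1⟩) (σ ⟨t + 1, h1⟩) with h | h | h
      · exact h
      · exact absurd (σ.injective h) (by simp [Fin.ext_iff])
      · exact absurd heq (ne_of_lt (hc ⟨t, Nat.lt_of_succ_lt h1⟩ h1 h))
  intro i j hij hgij
  exact (rel_of_adj (g := fun u => (g u, σ u)) r htrans H i j hij).2 hgij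

end Wp

namespace Wp

variable {d : ℕ}

lemma gap_lower {v : Fin d → ℕ}
    (hv : ∀ t u : Fin d, (u : ℕ) = (t : ℕ) + 1 → v t + 1 ≤ v u) :
    ∀ (k : ℕ) (i j : Fin d), (j : ℕ) = (i : ℕ) + k → v i + k ≤ v j := by
  intro k
  induction k with
  | zero =>
    intro i j hij
    have : i = j := Fin.ext (by omega)
    subst this
    omega
  | succ k ih =>
    intro i j hij
    have hjd := j.isLt
    have hm : (i : ℕ) + k < d := by omega
    have h1 := ih i ⟨(i : ℕ) + k, hm⟩ rfl
    have h2 := hv ⟨(i : ℕ) + k, hm⟩ j (by simp only; omega)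
    omega

lemma gap_upper {v : Fin d → ℕ}
    (hv : ∀ t u : Fin d, (u : ℕ) = (t : ℕ) + 1 → v u ≤ v t + 1) :
    ∀ (k : ℕ) (i j : Fin d), (j : ℕ) = (i : ℕ) + k → v j ≤ v i + k := by
  intro k
  induction k with
  | zero =>
    intro i j hij
    have : i = j := Fin.ext (by omega)
    subst this
    omega
  | succ k ih =>
    intro i j hij
    have hjd := j.isLt
    have hm : (i : ℕ) + k < d := by omega
    have h1 := ih i ⟨(i : ℕ) + k, hm⟩ rfl
    have h2 := hv ⟨(i : ℕ) + k, hm⟩ j (by simp only; omega)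
    omega

lemma strictMono_adj {M : ℕ} {h : Fin d → Fin M} (hh : StrictMono h) :
    ∀ t u : Fin d, (u : ℕ) = (t : ℕ) + 1 → (h t : ℕ) + 1 ≤ (h u : ℕ) := by
  intro t u htu
  have := hh (show t < u by rw [Fin.lt_def]; omega)
  rw [Fin.lt_def] at this
  omega

lemma val_le_strictMono {M : ℕ} {h : Fin d → Fin M} (hh : StrictMono h) (t : Fin d) :
    (t : ℕ) ≤ (h t : ℕ) := by
  have hd : 0 < d := t.pos
  have := gap_lower (v := fun t => (h t : ℕ)) (strictMono_adj hh) (t : ℕ) ⟨0, hd⟩ t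
    (by simp only; omega)
  omega

lemma cF_step_le (σ : Equiv.Perm (Fin d)) :
    ∀ t u : Fin d, (u : ℕ) = (t : ℕ) + 1 → cF σ u ≤ cF σ t + 1 := by
  intro t u htu
  rw [cF_step σ t u htu]
  split_ifs <;> omega

/-- The fiber of the sorting map over `σ`: monotone sequences strictly increasing
at the descents of `σ`. -/
def Fib (σ : Equiv.Perm (Fin d)) (N : ℕ) :=
  {g : Fin d → Fin N // Monotone g ∧ ∀ (t : Fin d) (h1 : (t : ℕ) + 1 < d),
      σ ⟨(t : ℕ) + 1, h1⟩ < σ t → g t < g ⟨(t : ℕ) + 1, h1⟩}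

lemma hub_strictMono (hd : 1 ≤ d) (σ : Equiv.Perm (Fin d)) {n : ℕ}
    {h : Fin d → Fin (n + 1 + ((d - 1) - desF σ))} (hh : StrictMono h) (t : Fin d) :
    (h t : ℕ) ≤ n + cF σ t := by
  have hlt := t.isLt
  have hlast : ((⟨d - 1, by omega⟩ : Fin d) : ℕ) = (t : ℕ) + (d - 1 - (t : ℕ)) := by
    simp only; omega
  have g1 := gap_lower (v := fun t => (h t : ℕ)) (strictMono_adj hh)
    (d - 1 - (t : ℕ)) t ⟨d - 1, by omega⟩ hlast
  have g2 := gap_upper (v := fun t => cF σ t) (cF_step_le σ)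
    (d - 1 - (t : ℕ)) t ⟨d - 1, by omega⟩ hlast
  have hcl : cF σ (⟨d - 1, by omega⟩ : Fin d) = (d - 1) - desF σ := cF_last σ rfl
  have hbd := (h ⟨d - 1, by omega⟩).isLt
  have hdes := desF_le hd σ
  omega

noncomputable def fibEquiv (hd : 1 ≤ d) (σ : Equiv.Perm (Fin d)) (n : ℕ) :
    Fib σ (n + 1) ≃ {h : Fin d → Fin (n + 1 + ((d - 1) - desF σ)) // StrictMono h} where
  toFun g := ⟨fun t => ⟨(g.1 t : ℕ) + cF σ t, by
      have h1 : (g.1 t : ℕ) ≤ n := by have := (g.1 t).isLt; omega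
      have h2 := cF_le hd σ t
      omega⟩, by
    intro a b hab
    rw [Fin.lt_def]
    refine strictMono_of_adj (g := fun t => (g.1 t : ℕ) + cF σ t) ?_ hab
    intro t h1
    have hstep := cF_step σ ⟨t, Nat.lt_of_succ_lt h1⟩ ⟨t + 1, h1⟩ rfl
    by_cases hD : (⟨t, Nat.lt_of_succ_lt h1⟩ : Fin d) ∈ Dset σ
    · obtain ⟨h', hlt⟩ := mem_Dset.1 hD
      have hg := g.2.2 ⟨t, Nat.lt_of_succ_lt h1⟩ h1 hlt
      rw [Fin.lt_def] at hg
      rw [if_pos hD] at hstep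
      dsimp only at hg
      omega
    · have hg := g.2.1 (show (⟨t, Nat.lt_of_succ_lt h1⟩ : Fin d) ≤ ⟨t + 1, h1⟩ by
        rw [Fin.mk_le_mk]; omega)
      rw [Fin.le_def] at hg
      rw [if_neg hD] at hstep
      omega⟩
  invFun h :=
    ⟨fun t => ⟨(h.1 t : ℕ) - cF σ t, by
        have := hub_strictMono hd σ h.2 t
        omega⟩, by
      intro a b hab
      rw [Fin.le_def]
      refine monotone_of_adj (g := fun t => (h.1 t : ℕ) - cF σ t) ?_ hab
      intro t h1
      have hstep := cF_step_le σ ⟨t, Nat.lt_of_succ_lt h1⟩ ⟨t + 1, h1⟩ rfl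
      have hmono := strictMono_adj h.2 ⟨t, Nat.lt_of_succ_lt h1⟩ ⟨t + 1, h1⟩ rfl
      have hv1 := val_le_strictMono h.2 ⟨t, Nat.lt_of_succ_lt h1⟩
      have hc1 := cF_le_val σ ⟨t, Nat.lt_of_succ_lt h1⟩
      simp only at hv1 hc1
      omega, by
      intro t h1 hlt
      rw [Fin.lt_def]
      dsimp only
      have hD : t ∈ Dset σ := mem_Dset.2 ⟨h1, hlt⟩
      have hstep := cF_step σ t ⟨(t : ℕ) + 1, h1⟩ rfl
      rw [if_pos hD] at hstep
      have hmono := strictMono_adj h.2 t ⟨(t : ℕ) + 1, h1⟩ rfl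
      have hv1 := val_le_strictMono h.2 t
      have hc1 := cF_le_val σ t
      omega⟩
  left_inv g := by
    apply Subtype.ext
    funext t
    apply Fin.ext
    show ((g.1 t : ℕ) + cF σ t) - cF σ t = (g.1 t : ℕ)
    omega
  right_inv h := by
    apply Subtype.ext
    funext t
    apply Fin.ext
    show ((h.1 t : ℕ) - cF σ t) + cF σ t = (h.1 t : ℕ)
    have h1 := val_le_strictMono h.2 t
    have h2 := cF_le_val σ t
    omega

lemma card_Fib (hd : 1 ≤ d) (σ : Equiv.Perm (Fin d)) (n : ℕ) :
    Nat.card (Fib σ (n + 1)) = (n + d - desF σ).choose d := by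
  rw [Nat.card_congr (fibEquiv hd σ n), card_strictMono]
  congr 1
  have := desF_le hd σ
  omega

end Wp

namespace Wp

variable {d : ℕ}

noncomputable def sortFiberEquiv (σ : Equiv.Perm (Fin d)) (N : ℕ) :
    {f : Fin d → Fin N // Tuple.sort f = σ} ≃ Fib σ N where
  toFun f := ⟨f.1 ∘ σ, by
      have hs : σ = Tuple.sort f.1 := f.2.symm
      exact (Tuple.eq_sort_iff.1 hs).1, by
    intro t h1 hlt
    have hs : σ = Tuple.sort f.1 := f.2.symm
    have hmono := (Tuple.eq_sort_iff.1 hs).1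
    have hstab := (Tuple.eq_sort_iff.1 hs).2
    have hle : (f.1 ∘ σ) t ≤ (f.1 ∘ σ) ⟨(t : ℕ) + 1, h1⟩ :=
      hmono (by rw [Fin.le_def]; dsimp only; omega)
    rcases eq_or_lt_of_le hle with heq | h
    · exfalso
      have := hstab t ⟨(t : ℕ) + 1, h1⟩ (by rw [Fin.lt_def]; dsimp only; omega) heq
      exact absurd this (not_lt.2 (le_of_lt hlt))
    · exact h⟩
  invFun g := ⟨g.1 ∘ σ.symm, by
    have hcomp : (g.1 ∘ ⇑σ.symm) ∘ ⇑σ = g.1 := by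
      funext x; simp
    symm
    rw [Tuple.eq_sort_iff]
    constructor
    · rw [hcomp]; exact g.2.1
    · intro i j hij hfe
      apply block_lemma σ g.2.1 g.2.2 i j hij
      have h1 : (g.1 ∘ ⇑σ.symm) (σ i) = g.1 i := by simp
      have h2 : (g.1 ∘ ⇑σ.symm) (σ j) = g.1 j := by simp
      rw [h1, h2] at hfe
      exact hfe⟩
  left_inv f := by
    apply Subtype.ext
    funext x
    simp
  right_inv g := by
    apply Subtype.ext
    funext x
    simp

lemma desF_lt (hd : 1 ≤ d) (σ : Equiv.Perm (Fin d)) : desF σ < d := by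
  have := desF_le hd σ
  omega

lemma eulerian_eq (d i : ℕ) :
    eulerian d i = (Finset.univ.filter (fun σ : Equiv.Perm (Fin d) => desF σ = i)).card := by
  classical
  rw [eulerian]
  have hp : (fun σ : Equiv.Perm (Fin d) =>
      Nat.card {t : Fin d // ∃ h : (t : ℕ) + 1 < d, σ ⟨(t : ℕ) + 1, h⟩ < σ t} = i)
      = fun σ => desF σ = i := by
    funext σ
    rw [desF_eq]
  rw [hp, Nat.card_eq_fintype_card, Fintype.card_subtype]

theorem worp (d n : ℕ) (hd : 1 ≤ d) :
    (n + 1) ^ d = ∑ i ∈ Finset.range d, eulerian d i * ((n + d - i).choose d) := by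
  classical
  have h1 : (n + 1) ^ d = Fintype.card (Fin d → Fin (n + 1)) := by
    rw [Fintype.card_fun, Fintype.card_fin, Fintype.card_fin]
  have h2 : Fintype.card (Fin d → Fin (n + 1)) =
      ∑ σ : Equiv.Perm (Fin d),
        ((Finset.univ.filter (fun f : Fin d → Fin (n + 1) => Tuple.sort f = σ)).card) := by
    rw [← Finset.card_univ]
    exact Finset.card_eq_sum_card_fiberwise (fun f _ => Finset.mem_univ _)
  have h3 : ∀ σ : Equiv.Perm (Fin d),
      (Finset.univ.filter (fun f : Fin d → Fin (n + 1) => Tuple.sort f = σ)).card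
      = (n + d - desF σ).choose d := by
    intro σ
    rw [← Fintype.card_subtype, ← Nat.card_eq_fintype_card,
      Nat.card_congr (sortFiberEquiv σ (n + 1)), card_Fib hd σ n]
  have h4 : ∑ σ : Equiv.Perm (Fin d), (n + d - desF σ).choose d
      = ∑ i ∈ Finset.range d, eulerian d i * ((n + d - i).choose d) := by
    rw [← Finset.sum_fiberwise_of_maps_to
      (g := desF) (t := Finset.range d)
      (fun σ _ => Finset.mem_range.2 (desF_lt hd σ))
      (fun σ => (n + d - desF σ).choose d)]
    refine Finset.sum_congr rfl fun i _ => ?_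
    rw [eulerian_eq]
    rw [Finset.sum_congr rfl (fun σ hσ => by
      rw [(Finset.mem_filter.1 hσ).2])]
    rw [Finset.sum_const, smul_eq_mul]
  rw [h1, h2, Finset.sum_congr rfl (fun σ _ => h3 σ), h4]

end Wp

open Wp Polynomial in
theorem stmt19' (d j : ℕ) (hd : 1 ≤ d) (hj : j ≤ d) :
    (d ! : ℤ) * (d.choose j : ℤ) = ∑ i ∈ Finset.range d, (eulerian d i : ℤ) * eNum d i j := by
  set L : ℤ[X] := C ((d ! : ℤ)) * (X + 1) ^ d with hL
  set R : ℤ[X] := ∑ i ∈ Finset.range d, C ((eulerian d i : ℤ)) * P d i with hR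
  have hpoly : L = R := by
    apply Polynomial.eq_of_infinite_eval_eq
    apply Set.Infinite.mono (s := Set.Ioi (d : ℤ)) _ (Set.Ioi_infinite _)
    intro x hx
    rw [Set.mem_Ioi] at hx
    have hx0 : 0 ≤ x := le_trans (by positivity) (le_of_lt hx)
    obtain ⟨n, rfl⟩ : ∃ n : ℕ, x = (n : ℤ) := ⟨x.toNat, (Int.toNat_of_nonneg hx0).symm⟩
    have hdn : d ≤ n := by exact_mod_cast le_of_lt hx
    show L.eval (n : ℤ) = R.eval (n : ℤ)
    have hLeval : L.eval (n : ℤ) = (d ! : ℤ) * ((n : ℤ) + 1) ^ d := by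
      simp [hL]
    have hReval : R.eval (n : ℤ) = ∑ i ∈ Finset.range d,
        (eulerian d i : ℤ) * ((d ! : ℤ) * ((n + d - i).choose d : ℤ)) := by
      rw [hR, Polynomial.eval_finset_sum]
      refine Finset.sum_congr rfl fun i hi => ?_
      rw [Finset.mem_range] at hi
      rw [Polynomial.eval_mul, Polynomial.eval_C, P_eval d i n hi hdn,
        Nat.descFactorial_eq_factorial_mul_choose]
      push_cast
      ring
    rw [hLeval, hReval]
    have hw := worp d n hd
    have hw' : ((n + 1) ^ d : ℤ) = ∑ i ∈ Finset.range d,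
        (eulerian d i : ℤ) * ((n + d - i).choose d : ℤ) := by
      exact_mod_cast congrArg (Nat.cast : ℕ → ℤ) hw
    calc (d ! : ℤ) * ((n : ℤ) + 1) ^ d
        = (d ! : ℤ) * ((n + 1 : ℕ) : ℤ) ^ d := by push_cast; ring
      _ = (d ! : ℤ) * ∑ i ∈ Finset.range d,
            (eulerian d i : ℤ) * ((n + d - i).choose d : ℤ) := by rw [← hw']; push_cast; ring
      _ = ∑ i ∈ Finset.range d,
            (eulerian d i : ℤ) * ((d ! : ℤ) * ((n + d - i).choose d : ℤ)) := by
          rw [Finset.mul_sum]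
          exact Finset.sum_congr rfl fun i _ => by ring
  have hcoeff := congrArg (fun p : ℤ[X] => p.coeff j) hpoly
  simp only [hL, hR] at hcoeff
  rw [Polynomial.coeff_C_mul, Polynomial.coeff_X_add_one_pow, Polynomial.finset_sum_coeff] at hcoeff
  rw [hcoeff]
  refine Finset.sum_congr rfl fun i hi => ?_
  rw [Finset.mem_range] at hi
  rw [Polynomial.coeff_C_mul, P_coeff d i j (le_of_lt hi)]

/-- For every `d ≥ 1` and `0 ≤ j ≤ d`, the coefficient of `n^j` in
`d!·(n+1)^d`, namely `d!·C(d,j)`, equals `∑_{i=0}^{d-1} A(d,i)·e(d,i,j)`. -/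
theorem stmt19 (d j : ℕ) (hd : 1 ≤ d) (hj : j ≤ d) :
    (d ! : ℤ) * (d.choose j : ℤ) = ∑ i ∈ Finset.range d, (eulerian d i : ℤ) * eNum d i j := stmt19' d j hd hj
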